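/- Failure of the pinching estimate for α > 2: for every real α > 2, there exist real numbers 0 < r1 < r2 such that (2*α^2 - 5*α + 2)*r2^2*r1^3 - (4*α^2 - 7*α + 6)*r2^3*r1^2 + (2*α^2 - 3*α - 2)*r2^4*r1 + (α - 2)*r2^5 > 0. -/

import Mathlib

/-- Failure of the pinching estimate for `α > 2`: the numerator of `Q2` can be
positive. -/
theorem Q2_numerator_pos_of_alpha_gt_two (α : ℝ) (hα : 2 < α) :
    ∃ r1 r2 : ℝ, 0 < r1 ∧ r1 < r2 ∧
      (2 * α ^ 2 - 5 * α + 2) * r2 ^ 2 * r1 ^ 3 - (4 * α ^ 2 - 7 * α + 6) * r2 ^ 3 * r1 ^ 2 +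
        (2 * α ^ 2 - 3 * α - 2) * r2 ^ 4 * r1 + (α - 2) * r2 ^ 5 > 0 := by
  have hc : 0 < α - 2 := by linarith
  have hB : 0 < 4 * α ^ 2 - 7 * α + 6 := by nlinarith
  set t : ℝ := (4 * α ^ 2 - 7 * α + 6) / (α - 2) + 1 with ht
  have hdiv : 0 < (4 * α ^ 2 - 7 * α + 6) / (α - 2) := div_pos hB hc
  have ht1 : 1 < t := by simp [ht]; linarith
  have hkey : (α - 2) * t = 4 * α ^ 2 - 7 * α + 6 + (α - 2) := by
    rw [ht, mul_add, mul_div_cancel₀ _ hc.ne']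
    ring
  refine ⟨1, t, one_pos, ht1, ?_⟩
  have h1 : 0 < 2 * α ^ 2 - 5 * α + 2 := by nlinarith
  have h2 : 0 < 2 * α ^ 2 - 3 * α - 2 := by nlinarith
  have ht0 : 0 < t := by linarith
  have h5 : (α - 2) * t ^ 5 > (4 * α ^ 2 - 7 * α + 6) * t ^ 3 := by
    have : (α - 2) * t ^ 5 = ((α - 2) * t) * t ^ 4 := by ring
    rw [this, hkey]
    nlinarith [mul_pos (mul_pos hB (pow_pos ht0 3)) (sub_pos.mpr ht1),
      mul_pos hc (pow_pos ht0 4)]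
  nlinarith [mul_pos h1 (pow_pos ht0 2), mul_pos h2 (pow_pos ht0 4)]
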